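/- arXiv:2005.00049 — 8 statements merged into one kernel-verified Lean document; each statement's English description precedes it below -/
import Mathlib

section
/- The set {(s,e,i,r) : s ≥ 0, e ≥ 0, i ≥ 0, r ≥ 0, s + e + i + r ≤ 1} is positively invariant under the flow of the SEIR system s' = -β s i, e' = β s i - α e, i' = α e - γ i, r' = γ i, for α, β, γ > 0. -/
open Real Set

/-- Auxiliary positivity lemma for a cooperative 2D linear system `p' = c q`, `q' = d p`
with nonnegative coefficients. -/
lemma seir_aux_pos {p q c d : ℝ → ℝ} {T : ℝ}
    (hcont_c : Continuous c) (hcont_d : Continuous d)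
    (hcnn : ∀ t ∈ Icc (0:ℝ) T, 0 ≤ c t) (hdnn : ∀ t ∈ Icc (0:ℝ) T, 0 ≤ d t)
    (hp : ∀ t, HasDerivAt p (c t * q t) t) (hq : ∀ t, HasDerivAt q (d t * p t) t)
    (hp0 : 0 ≤ p 0) (hq0 : 0 ≤ q 0) :
    ∀ t ∈ Icc (0:ℝ) T, 0 ≤ p t ∧ 0 ≤ q t := by
  have cp : Continuous p := by
    rw [continuous_iff_continuousAt]; exact fun t => (hp t).continuousAt
  have cq : Continuous q := by
    rw [continuous_iff_continuousAt]; exact fun t => (hq t).continuousAt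
  -- bound on the coefficients
  obtain ⟨C₁, hC₁⟩ := isCompact_Icc.exists_bound_of_continuousOn
    (s := Icc (0:ℝ) T) hcont_c.continuousOn
  obtain ⟨C₂, hC₂⟩ := isCompact_Icc.exists_bound_of_continuousOn
    (s := Icc (0:ℝ) T) hcont_d.continuousOn
  set K : ℝ := max (max C₁ C₂) 0 with hKdef
  have hK0 : 0 ≤ K := le_max_right _ _
  have hKc : ∀ t ∈ Icc (0:ℝ) T, c t ≤ K := fun t ht =>
    le_trans (le_trans (le_abs_self _) (hC₁ t ht)) (le_trans (le_max_left _ _) (le_max_left _ _))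
  have hKd : ∀ t ∈ Icc (0:ℝ) T, d t ≤ K := fun t ht =>
    le_trans (le_trans (le_abs_self _) (hC₂ t ht)) (le_trans (le_max_right _ _) (le_max_left _ _))
  -- the "negative part" function
  set f : ℝ → ℝ := fun t => max (max (-p t) (-q t)) 0 with hfdef
  set f' : ℝ → ℝ := fun t => max (max (c t * (-q t)) (d t * (-p t))) 0 with hf'def
  have hfcont : ContinuousOn f (Icc 0 T) :=
    (((cp.neg.max cq.neg).max continuous_const)).continuousOn
  have hfp : ∀ t, -p t ≤ f t := fun t => le_trans (le_max_left _ _) (le_max_left _ _)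
  have hfq : ∀ t, -q t ≤ f t := fun t => le_trans (le_max_right _ _) (le_max_left _ _)
  have hfnn : ∀ t, 0 ≤ f t := fun t => le_max_right _ _
  have hf0 : f 0 ≤ 0 := max_le (max_le (neg_nonpos.2 hp0) (neg_nonpos.2 hq0)) le_rfl
  -- liminf slope condition
  have hslope : ∀ x ∈ Ico (0:ℝ) T, ∀ r, f' x < r →
      ∃ᶠ z in nhdsWithin x (Ioi x), (z - x)⁻¹ * (f z - f x) < r := by
    intro x _ r hr
    have hrpos : (0:ℝ) < r := lt_of_le_of_lt (le_max_right _ _) hr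
    have h1 : c x * (-q x) < r :=
      lt_of_le_of_lt (le_trans (le_max_left _ _) (le_max_left _ _)) hr
    have h2 : d x * (-p x) < r :=
      lt_of_le_of_lt (le_trans (le_max_right _ _) (le_max_left _ _)) hr
    have Tp : Filter.Tendsto (slope (fun t => -p t) x) (nhdsWithin x {x}ᶜ)
        (nhds (c x * (-q x))) := by
      have heq : c x * (-q x) = -(c x * q x) := by ring
      rw [heq]
      exact (hasDerivAt_iff_tendsto_slope).1 (hp x).neg
    have Tq : Filter.Tendsto (slope (fun t => -q t) x) (nhdsWithin x {x}ᶜ)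
        (nhds (d x * (-p x))) := by
      have heq : d x * (-p x) = -(d x * p x) := by ring
      rw [heq]
      exact (hasDerivAt_iff_tendsto_slope).1 (hq x).neg
    have hle : nhdsWithin x (Ioi x) ≤ nhdsWithin x {x}ᶜ :=
      nhdsWithin_mono _ (fun z hz => ne_of_gt hz)
    have Ep : ∀ᶠ z in nhdsWithin x (Ioi x), slope (fun t => -p t) x z < r :=
      (Tp.mono_left hle).eventually_lt_const h1
    have Eq' : ∀ᶠ z in nhdsWithin x (Ioi x), slope (fun t => -q t) x z < r :=
      (Tq.mono_left hle).eventually_lt_const h2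
    refine (((Ep.and Eq').and self_mem_nhdsWithin).mono ?_).frequently
    rintro z ⟨⟨hzp, hzq⟩, hz⟩
    have hzx : 0 < z - x := sub_pos.2 hz
    rw [slope_def_field, div_lt_iff₀ hzx] at hzp hzq
    rw [inv_mul_eq_div, div_lt_iff₀ hzx]
    have hfz : f z < f x + r * (z - x) := by
      apply max_lt (max_lt ?_ ?_) ?_
      · have := hfp x; linarith
      · have := hfq x; linarith
      · have := hfnn x; nlinarith
    linarith
  -- bound condition
  have hbound : ∀ x ∈ Ico (0:ℝ) T, f' x ≤ K * f x + 0 := by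
    intro x hx
    have hx' : x ∈ Icc (0:ℝ) T := Ico_subset_Icc_self hx
    rw [add_zero]
    apply max_le (max_le ?_ ?_) (mul_nonneg hK0 (hfnn x))
    · calc c x * (-q x) ≤ c x * f x := mul_le_mul_of_nonneg_left (hfq x) (hcnn x hx')
        _ ≤ K * f x := mul_le_mul_of_nonneg_right (hKc x hx') (hfnn x)
    · calc d x * (-p x) ≤ d x * f x := mul_le_mul_of_nonneg_left (hfp x) (hdnn x hx')
        _ ≤ K * f x := mul_le_mul_of_nonneg_right (hKd x hx') (hfnn x)
  have hG := le_gronwallBound_of_liminf_deriv_right_le hfcont hslope hf0 hbound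
  intro t ht
  have := hG t ht
  rw [gronwallBound_ε0_δ0] at this
  constructor
  · have := hfp t; linarith
  · have := hfq t; linarith

/-- the set {s,e,i,r ≥ 0, s+e+i+r ≤ 1} is positively invariant under the
SEIR flow. -/
theorem seir_invariant_region
    (α β γ : ℝ) (hα : 0 < α) (hβ : 0 < β) (hγ : 0 < γ)
    (s e i r : ℝ → ℝ)
    (hs : ∀ t, HasDerivAt s (-β * s t * i t) t)
    (he : ∀ t, HasDerivAt e (β * s t * i t - α * e t) t)
    (hi : ∀ t, HasDerivAt i (α * e t - γ * i t) t)
    (hr : ∀ t, HasDerivAt r (γ * i t) t)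
    (h0 : 0 ≤ s 0 ∧ 0 ≤ e 0 ∧ 0 ≤ i 0 ∧ 0 ≤ r 0 ∧ s 0 + e 0 + i 0 + r 0 ≤ 1) :
    ∀ t ≥ (0 : ℝ),
      0 ≤ s t ∧ 0 ≤ e t ∧ 0 ≤ i t ∧ 0 ≤ r t ∧ s t + e t + i t + r t ≤ 1 := by
  obtain ⟨hs0, he0, hi0, hr0, hsum0⟩ := h0
  have cs : Continuous s := by
    rw [continuous_iff_continuousAt]; exact fun t => (hs t).continuousAt
  have ci : Continuous i := by
    rw [continuous_iff_continuousAt]; exact fun t => (hi t).continuousAt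
  have cr : Continuous r := by
    rw [continuous_iff_continuousAt]; exact fun t => (hr t).continuousAt
  -- s is nonnegative everywhere (sign preservation)
  have hsnn : ∀ t, 0 ≤ s t := by
    intro t
    have hI : ∀ u : ℝ, HasDerivAt (fun v => ∫ τ in (0:ℝ)..v, i τ) (i u) u := by
      intro u
      exact intervalIntegral.integral_hasDerivAt_right
        (ci.intervalIntegrable _ _) (ci.stronglyMeasurableAtFilter _ _) ci.continuousAt
    have hg : ∀ u : ℝ, HasDerivAt
        (fun v => s v * Real.exp (β * ∫ τ in (0:ℝ)..v, i τ)) 0 u := by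
      intro u
      have := (hs u).fun_mul (((hI u).const_mul β).exp)
      refine this.congr_deriv ?_; symm
      ring
    have hconst : (fun v => s v * Real.exp (β * ∫ τ in (0:ℝ)..v, i τ)) t =
        (fun v => s v * Real.exp (β * ∫ τ in (0:ℝ)..v, i τ)) 0 :=
      is_const_of_deriv_eq_zero (fun u => (hg u).differentiableAt) (fun u => (hg u).deriv) t 0
    simp only [intervalIntegral.integral_same, mul_zero, Real.exp_zero, mul_one] at hconst
    nlinarith [Real.exp_pos (β * ∫ τ in (0:ℝ)..t, i τ)]
  -- e and i are nonnegative on [0, T] for every T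
  have key : ∀ T : ℝ, ∀ t ∈ Icc (0:ℝ) T, 0 ≤ e t ∧ 0 ≤ i t := by
    intro T
    have hp : ∀ t, HasDerivAt (fun t => e t * Real.exp (α * t))
        ((β * s t * Real.exp ((α - γ) * t)) * (i t * Real.exp (γ * t))) t := by
      intro t
      have := (he t).fun_mul (((hasDerivAt_id t).const_mul α).exp)
      refine this.congr_deriv ?_; symm
      have h1 : Real.exp ((α - γ) * t) * Real.exp (γ * t) = Real.exp (α * t) := by
        rw [← Real.exp_add]; congr 1; ring
      simp only [id_eq]
      linear_combination (β * s t * i t) * h1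
    have hq : ∀ t, HasDerivAt (fun t => i t * Real.exp (γ * t))
        ((α * Real.exp ((γ - α) * t)) * (e t * Real.exp (α * t))) t := by
      intro t
      have := (hi t).fun_mul (((hasDerivAt_id t).const_mul γ).exp)
      refine this.congr_deriv ?_; symm
      have h1 : Real.exp ((γ - α) * t) * Real.exp (α * t) = Real.exp (γ * t) := by
        rw [← Real.exp_add]; congr 1; ring
      simp only [id_eq]
      linear_combination (α * e t) * h1
    have hmain := seir_aux_pos
      (c := fun t => β * s t * Real.exp ((α - γ) * t))
      (d := fun t => α * Real.exp ((γ - α) * t)) (T := T)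
      (by fun_prop) (by fun_prop)
      (fun t _ => mul_nonneg (mul_nonneg hβ.le (hsnn t)) (Real.exp_pos _).le)
      (fun t _ => mul_nonneg hα.le (Real.exp_pos _).le)
      hp hq
      (by simpa using mul_nonneg he0 (Real.exp_pos (α * 0)).le)
      (by simpa using mul_nonneg hi0 (Real.exp_pos (γ * 0)).le)
    intro t ht
    obtain ⟨h1, h2⟩ := hmain t ht
    constructor
    · nlinarith [Real.exp_pos (α * t)]
    · nlinarith [Real.exp_pos (γ * t)]
  -- the total population is constant
  have hsum : ∀ t, s t + e t + i t + r t = s 0 + e 0 + i 0 + r 0 := by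
    intro t
    have hW : ∀ u, HasDerivAt (fun u => s u + e u + i u + r u) 0 u := by
      intro u
      have := (((hs u).fun_add (he u)).fun_add (hi u)).fun_add (hr u)
      refine this.congr_deriv ?_; symm
      ring
    exact is_const_of_deriv_eq_zero (fun u => (hW u).differentiableAt)
      (fun u => (hW u).deriv) t 0
  -- conclusion
  intro t ht
  obtain ⟨het, hit⟩ := key t t ⟨ht, le_refl t⟩
  have hrt : 0 ≤ r t := by
    have hmono : MonotoneOn r (Icc 0 t) := by
      apply monotoneOn_of_deriv_nonneg (convex_Icc 0 t) cr.continuousOn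
        (fun x _ => (hr x).differentiableAt.differentiableWithinAt)
      intro x hx
      rw [interior_Icc] at hx
      rw [(hr x).deriv]
      exact mul_nonneg hγ.le ((key t x ⟨hx.1.le, hx.2.le⟩).2)
    exact le_trans hr0 (hmono ⟨le_refl 0, ht⟩ ⟨ht, le_refl t⟩ ht)
  exact ⟨hsnn t, het, hit, hrt, by rw [hsum t]; exact hsum0⟩
end

section
/- If γ > β > 0, then for each sufficiently small ε ≥ 0 the equation γ log s - β s = γ log(1 - ε) - β has a unique solution s*(ε) in (0, 1], and s*(ε) = 1 - γ ε/(γ - β) + o(ε) as ε → 0+. -/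
set_option maxHeartbeats 1000000


open Real Set Filter Asymptotics

/-- in the subcritical regime γ > β, for small ε ≥ 0 the equation
γ log s - β s = γ log(1-ε) - β has a unique solution s*(ε) ∈ (0,1], with
s*(ε) = 1 - γ ε/(γ-β) + o(ε) as ε → 0⁺. -/
theorem seir_subcritical_final_size
    (β γ : ℝ) (hβ : 0 < β) (hγβ : β < γ) :
    ∃ ε₀ > (0 : ℝ), ∃ sStar : ℝ → ℝ,
      (∀ ε ∈ Set.Ico (0 : ℝ) ε₀,
        (sStar ε ∈ Set.Ioc (0 : ℝ) 1 ∧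
          γ * Real.log (sStar ε) - β * sStar ε = γ * Real.log (1 - ε) - β) ∧
        ∀ x ∈ Set.Ioc (0 : ℝ) 1,
          γ * Real.log x - β * x = γ * Real.log (1 - ε) - β → x = sStar ε) ∧
      (fun ε => sStar ε - (1 - γ * ε / (γ - β)))
        =o[nhdsWithin 0 (Set.Ioi 0)] (fun ε => ε) := by
  have hγ : 0 < γ := hβ.trans hγβ
  have hγβ' : 0 < γ - β := by linarith
  set g : ℝ → ℝ := fun x => γ * Real.log x - β * x with hg
  -- the function g is strictly monotone on (0,1]
  have hmono : StrictMonoOn g (Set.Ioc 0 1) := by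
    apply strictMonoOn_of_deriv_pos (convex_Ioc 0 1)
    · apply ContinuousOn.sub
      · exact continuousOn_const.mul (Real.continuousOn_log.mono
          (fun x hx => ne_of_gt hx.1))
      · exact continuousOn_const.mul continuousOn_id
    · intro x hx
      rw [interior_Ioc] at hx
      have hx0 : x ≠ 0 := ne_of_gt hx.1
      have hd : HasDerivAt g (γ * x⁻¹ - β * 1) x :=
        ((Real.hasDerivAt_log hx0).const_mul γ).sub ((hasDerivAt_id x).const_mul β)
      rw [hd.deriv]
      have hinv : 1 < x⁻¹ := (one_lt_inv₀ hx.1).mpr hx.2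
      nlinarith
  -- existence & uniqueness of solutions for ε ∈ [0,1)
  have key : ∀ ε : ℝ, ∃ x : ℝ, 0 ≤ ε → ε < 1 →
      (x ∈ Set.Ioc (0:ℝ) 1 ∧ g x = γ * Real.log (1-ε) - β) ∧
      ∀ y ∈ Set.Ioc (0:ℝ) 1, g y = γ * Real.log (1-ε) - β → y = x := by
    intro ε
    by_cases hε : 0 ≤ ε ∧ ε < 1
    · obtain ⟨hε0, hε1⟩ := hε
      set c := γ * Real.log (1-ε) - β with hc
      have h1ε : 0 < 1 - ε := by linarith
      have hlogneg : Real.log (1-ε) ≤ 0 := Real.log_nonpos h1ε.le (by linarith)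
      have hcle : c ≤ -β := by nlinarith
      set a := Real.exp (c/γ) with ha
      have ha0 : 0 < a := Real.exp_pos _
      have ha1 : a ≤ 1 := by
        rw [ha, Real.exp_le_one_iff]
        apply div_nonpos_of_nonpos_of_nonneg _ hγ.le
        linarith
      have hga : g a ≤ c := by
        have hla : Real.log a = c/γ := by rw [ha, Real.log_exp]
        have hgae : g a = c - β * a := by
          show γ * Real.log a - β * a = c - β * a
          rw [hla, mul_comm γ (c/γ), div_mul_cancel₀ c hγ.ne']
        rw [hgae]
        nlinarith
      have hg1 : g 1 = -β := by simp [hg]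
      have hcont : ContinuousOn g (Set.Icc a 1) := by
        apply ContinuousOn.sub
        · exact continuousOn_const.mul (Real.continuousOn_log.mono
            (fun x hx => ne_of_gt (lt_of_lt_of_le ha0 hx.1)))
        · exact continuousOn_const.mul continuousOn_id
      have hivt := intermediate_value_Icc ha1 hcont
      have hcmem : c ∈ Set.Icc (g a) (g 1) := ⟨hga, by rw [hg1]; exact hcle⟩
      obtain ⟨x, hx, hgx⟩ := hivt hcmem
      have hxmem : x ∈ Set.Ioc (0:ℝ) 1 := ⟨lt_of_lt_of_le ha0 hx.1, hx.2⟩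
      exact ⟨x, fun _ _ => ⟨⟨hxmem, hgx⟩,
        fun y hy hgy => hmono.injOn hy hxmem (hgy.trans hgx.symm)⟩⟩
    · exact ⟨1, fun h1 h2 => absurd ⟨h1, h2⟩ hε⟩
  choose sStar hsStar using key
  refine ⟨1/2, by norm_num, sStar, ?_, ?_⟩
  · intro ε hε
    have := hsStar ε hε.1 (by linarith [hε.2])
    exact ⟨⟨this.1.1, this.1.2⟩, fun x hx hgx => this.2 x hx hgx⟩
  · -- asymptotics
    obtain ⟨δ, hδγ, hδ0⟩ : ∃ δ : ℝ, δ * (γ - β) = γ ∧ 0 < δ :=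
      ⟨γ / (γ - β), by field_simp, div_pos hγ hγβ'⟩
    obtain ⟨C1, hC1, hC2⟩ : ∃ C1 : ℝ, C1 * (γ - β) = 2*γ*δ + 4*β*δ^2 ∧ 0 ≤ C1 :=
      ⟨(2*γ*δ + 4*β*δ^2) / (γ - β), by field_simp, by positivity⟩
    obtain ⟨C, hC⟩ : ∃ C : ℝ, C = 2*δ + C1 := ⟨_, rfl⟩
    have hC0 : 0 < C := by rw [hC]; nlinarith
    have hbound : ∀ ε ∈ Set.Ioo (0:ℝ) (1/2),
        |sStar ε - (1 - γ*ε/(γ-β))| ≤ C * ε^2 := by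
      intro ε hε
      obtain ⟨⟨hsmem, heq⟩, _⟩ := hsStar ε hε.1.le (by linarith [hε.2])
      set s := sStar ε with hs
      have hs0 : 0 < s := hsmem.1
      have hs1 : s ≤ 1 := hsmem.2
      have hε0 : 0 < ε := hε.1
      have hε2 : ε < 1/2 := hε.2
      have h1ε : 0 < 1 - ε := by linarith
      -- basic log inequalities
      have h1 : Real.log s ≤ s - 1 := Real.log_le_sub_one_of_pos hs0
      have h2 : Real.log s⁻¹ ≤ s⁻¹ - 1 := Real.log_le_sub_one_of_pos (by positivity)
      rw [Real.log_inv] at h2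
      have h2s : s * (-Real.log s) ≤ 1 - s := by
        have hm := mul_le_mul_of_nonneg_left h2 hs0.le
        have he : s * (s⁻¹ - 1) = 1 - s := by field_simp
        nlinarith [hm, he]
      have h3 : Real.log (1-ε) ≤ -ε := by
        have := Real.log_le_sub_one_of_pos h1ε
        linarith
      have h4 : Real.log (1-ε)⁻¹ ≤ (1-ε)⁻¹ - 1 :=
        Real.log_le_sub_one_of_pos (by positivity)
      rw [Real.log_inv] at h4
      have h4s : (1-ε) * (-Real.log (1-ε)) ≤ ε := by
        have hm := mul_le_mul_of_nonneg_left h4 h1ε.le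
        have he : (1-ε) * ((1-ε)⁻¹ - 1) = ε := by field_simp; ring
        nlinarith [hm, he]
      have heq' : γ * Real.log s - β * s = γ * Real.log (1-ε) - β := heq
      -- lower bound on the drop of g
      have hD : (γ-β)*(1-s) ≤ -(γ * Real.log (1-ε)) := by
        nlinarith [mul_le_mul_of_nonneg_left h1 hγ.le]
      have key1 : (γ-β)*(1-s)*(1-ε) ≤ γ*ε := by
        have q := mul_le_mul_of_nonneg_right hD h1ε.le
        nlinarith [q, mul_le_mul_of_nonneg_left h4s hγ.le]
      have hu0 : 0 ≤ 1 - s := by linarith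
      have hh : (γ-β)*(1-s) ≤ 2*(γ*ε) := by
        nlinarith [key1, mul_nonneg (mul_nonneg hγβ'.le hu0)
          (show (0:ℝ) ≤ 1/2 - ε by linarith)]
      have hu2δ : 1 - s ≤ 2*δ*ε := by
        have h2' : (γ-β)*(1-s) ≤ (γ-β)*(2*δ*ε) := by nlinarith [hh, hδγ]
        exact le_of_mul_le_mul_left h2' hγβ'
      -- upper bound on the drop of g
      have key2 : γ*ε*s ≤ γ*(1-s) - β*(1-s)*s := by
        nlinarith [mul_le_mul_of_nonneg_left h2s hγ.le,
          mul_le_mul_of_nonneg_right (mul_le_mul_of_nonneg_left h3 hγ.le) hs0.le]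
      have hgoal : γ*ε/(γ-β) = δ*ε := by
        rw [div_eq_iff hγβ'.ne']
        linear_combination (-ε) * hδγ
      rw [hgoal, abs_le]
      constructor
      · -- (1-s) - δε ≤ Cε²
        have h5 : (1-s)*(1-ε) ≤ δ*ε := by
          have h5' : (γ-β)*((1-s)*(1-ε)) ≤ (γ-β)*(δ*ε) := by nlinarith [key1, hδγ]
          exact le_of_mul_le_mul_left h5' hγβ'
        have h8 : (1-s) - δ*ε ≤ 2*δ*ε^2 := by
          nlinarith [h5, mul_le_mul_of_nonneg_right hu2δ hε0.le]
        nlinarith [h8, hC, mul_nonneg hC2 (sq_nonneg ε)]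
      · -- δε - (1-s) ≤ Cε²
        have h5 : (γ-β)*(δ*ε - (1-s)) ≤ γ*ε*(1-s) + β*(1-s)^2 := by
          nlinarith [key2, hδγ]
        have h6 : γ*ε*(1-s) + β*(1-s)^2 ≤ (2*γ*δ + 4*β*δ^2)*ε^2 := by
          nlinarith [mul_le_mul_of_nonneg_left hu2δ (mul_pos hγ hε0).le,
            mul_le_mul_of_nonneg_left (mul_self_le_mul_self hu0 hu2δ) hβ.le]
        have h7' : (γ-β)*(δ*ε - (1-s)) ≤ (γ-β)*(C1*ε^2) := by
          nlinarith [h5, h6, hC1]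
        have h7 := le_of_mul_le_mul_left h7' hγβ'
        nlinarith [h7, hC, mul_nonneg hδ0.le (sq_nonneg ε)]
    -- conclude little-o
    rw [isLittleO_iff]
    intro c hc
    have hmin : (0:ℝ) < min (1/2) (c/C) := lt_min (by norm_num) (div_pos hc hC0)
    filter_upwards [Ioo_mem_nhdsGT_of_mem (Set.left_mem_Ico.mpr hmin)] with ε hε
    have hε0 : 0 < ε := hε.1
    have hε12 : ε < 1/2 := lt_of_lt_of_le hε.2 (min_le_left _ _)
    have hεcC : ε < c/C := lt_of_lt_of_le hε.2 (min_le_right _ _)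
    have hb := hbound ε ⟨hε0, hε12⟩
    have : C * ε^2 ≤ c * ε := by
      have : C * ε ≤ c := by
        rw [← le_div_iff₀' hC0]; exact hεcC.le
      nlinarith
    calc ‖sStar ε - (1 - γ*ε/(γ-β))‖ = |sStar ε - (1 - γ*ε/(γ-β))| := rfl
      _ ≤ C * ε^2 := hb
      _ ≤ c * ε := this
      _ = c * ‖ε‖ := by rw [Real.norm_eq_abs, abs_of_pos hε0]
end

section
/- For R₀ > 1, the equation e^{-R₀ r} + r = 1 has exactly one solution r in the open interval (0, 1), and this solution satisfies r > 1 - 1/R₀. -/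
open Real Set

/-- for R₀ > 1, the equation e^{-R₀ r} + r = 1 has exactly one
solution r ∈ (0,1), and this solution satisfies r > 1 - 1/R₀. -/
theorem seir_epidemic_size_equation
    (R₀ : ℝ) (hR : 1 < R₀) :
    (∃! r : ℝ, r ∈ Set.Ioo (0 : ℝ) 1 ∧ Real.exp (-R₀ * r) + r = 1) ∧
    (∀ r ∈ Set.Ioo (0 : ℝ) 1, Real.exp (-R₀ * r) + r = 1 → 1 - 1 / R₀ < r) := by
  have hR0 : (0:ℝ) < R₀ := lt_trans one_pos hR
  set f : ℝ → ℝ := fun r => Real.exp (-R₀ * r) + r - 1 with hf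
  set t₀ : ℝ := Real.log R₀ / R₀ with ht₀
  have hlog : 0 < Real.log R₀ := Real.log_pos hR
  have ht0pos : 0 < t₀ := div_pos hlog hR0
  have hderiv : ∀ r, HasDerivAt f (Real.exp (-R₀ * r) * (-R₀) + 1) r := by
    intro r
    have h1 : HasDerivAt (fun r : ℝ => -R₀ * r) (-R₀) r := by
      simpa using (hasDerivAt_id r).const_mul (-R₀)
    exact (h1.exp.add (hasDerivAt_id r)).sub_const 1
  have hcont : Continuous f := by
    simp only [hf]; continuity
  set a : ℝ := 1 - 1/R₀ with ha
  have hapos : 0 < a := by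
    rw [ha]; have : 1/R₀ < 1 := by rw [div_lt_one hR0]; exact hR
    linarith
  have ha1 : a < 1 := by
    rw [ha]; have : 0 < 1/R₀ := by positivity
    linarith
  have hlt : Real.log R₀ < R₀ - 1 := by
    have hkey : R₀ < Real.exp (R₀ - 1) := by
      have := Real.add_one_lt_exp (show R₀ - 1 ≠ 0 by linarith)
      linarith
    have := Real.log_lt_log hR0 hkey
    simpa using this
  have hta : t₀ < a := by
    rw [ht₀, ha, div_lt_iff₀ hR0]
    have : (1 - 1/R₀) * R₀ = R₀ - 1 := by field_simp
    linarith
  have hfa : f a < 0 := by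
    have h1 : -R₀ * a = -(R₀ - 1) := by
      rw [ha]; have h' : R₀ * (1/R₀) = 1 := mul_one_div_cancel hR0.ne'
      linear_combination h'
    have hkey : R₀ < Real.exp (R₀ - 1) := by
      have := Real.add_one_lt_exp (show R₀ - 1 ≠ 0 by linarith)
      linarith
    have h2 : Real.exp (-(R₀ - 1)) < 1/R₀ := by
      rw [Real.exp_neg, one_div]
      exact inv_strictAnti₀ hR0 hkey
    simp only [hf]; rw [h1]
    linarith
  have hf1 : 0 < f 1 := by
    simp only [hf]
    have := Real.exp_pos (-R₀ * 1)
    linarith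
  have hf0 : f 0 = 0 := by simp [hf]
  -- monotonicity
  have hmono : StrictMonoOn f (Set.Ici t₀) := by
    apply strictMonoOn_of_deriv_pos (convex_Ici t₀) hcont.continuousOn
    intro x hx
    rw [interior_Ici] at hx
    rw [(hderiv x).deriv]
    have hx2 : Real.log R₀ / R₀ < x := hx
    rw [div_lt_iff₀ hR0, mul_comm] at hx2
    have hlt2 : Real.exp (-R₀ * x) < 1/R₀ := by
      calc Real.exp (-R₀ * x) < Real.exp (-Real.log R₀) :=
            Real.exp_lt_exp.mpr (by linarith)
        _ = 1/R₀ := by rw [Real.exp_neg, Real.exp_log hR0, one_div]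
    rw [lt_div_iff₀ hR0] at hlt2
    nlinarith
  have hanti : StrictAntiOn f (Set.Icc 0 t₀) := by
    apply strictAntiOn_of_deriv_neg (convex_Icc 0 t₀) hcont.continuousOn
    intro x hx
    rw [interior_Icc] at hx
    rw [(hderiv x).deriv]
    have hx2 : x < Real.log R₀ / R₀ := hx.2
    rw [lt_div_iff₀ hR0, mul_comm] at hx2
    have hlt2 : 1/R₀ < Real.exp (-R₀ * x) := by
      calc (1:ℝ)/R₀ = Real.exp (-Real.log R₀) := by
            rw [Real.exp_neg, Real.exp_log hR0, one_div]
        _ < Real.exp (-R₀ * x) := Real.exp_lt_exp.mpr (by linarith)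
    rw [div_lt_iff₀ hR0] at hlt2
    nlinarith
  -- any solution is > a (hence > t₀), key to both parts
  have hroot_gt : ∀ s ∈ Set.Ioo (0:ℝ) 1, f s = 0 → a < s := by
    intro s hs hfs
    by_contra hle
    push_neg at hle
    rcases lt_or_ge t₀ s with h1 | h1
    · -- s ∈ (t₀, a], f s ≤ f a < 0? strict mono: if s < a then f s < f a; s = a then f s = f a
      rcases lt_or_eq_of_le hle with h2 | h2
      · have := hmono (le_of_lt h1) (le_of_lt (lt_trans h1 h2)) h2
        linarith
      · rw [h2] at hfs; linarith
    · -- s ∈ (0, t₀], f s < f 0 = 0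
      have := hanti (Set.mem_Icc.mpr ⟨le_refl 0, le_of_lt ht0pos⟩)
        (Set.mem_Icc.mpr ⟨le_of_lt hs.1, h1⟩) hs.1
      rw [hf0] at this
      linarith
  constructor
  · -- existence via IVT on [a, 1]
    have hsub := intermediate_value_Ioo (le_of_lt ha1) hcont.continuousOn
    have h0mem : (0:ℝ) ∈ Set.Ioo (f a) (f 1) := ⟨hfa, hf1⟩
    obtain ⟨r, hr, hfr⟩ := hsub h0mem
    refine ⟨r, ⟨⟨lt_trans hapos hr.1, hr.2⟩, ?_⟩, ?_⟩
    · simp only [hf] at hfr; linarith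
    · rintro s ⟨hs, hseq⟩
      have hfs : f s = 0 := by simp only [hf]; linarith
      have hs_gt : a < s := hroot_gt s hs hfs
      have hr_gt : a < r := hr.1
      exact hmono.injOn (Set.mem_Ici.mpr (le_of_lt (lt_trans hta hs_gt)))
        (Set.mem_Ici.mpr (le_of_lt (lt_trans hta hr_gt))) (by rw [hfs, hfr])
  · intro r hr heq
    exact hroot_gt r hr (by simp only [hf]; linarith)
end

section
/- In the critical case β = γ, the solution s*(ε) ∈ (0,1) of log s - s = log(1 - ε) + ϑε - 1 satisfies s*(ε) = 1 - sqrt(2(1 - ϑ)ε) + o(√ε) as ε → 0+, for fixed ϑ ∈ [0, 1). -/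
open Real Set Filter Asymptotics Topology

lemma myF_deriv (x : ℝ) (hx : x ∈ Set.Ioo (0:ℝ) 1) :
    HasDerivAt (fun y : ℝ => -Real.log (1 - y) - y - y^2/2) (1/(1-x) - 1 - x) x := by
  obtain ⟨hx0, hx1⟩ := hx
  have h1 : (1:ℝ) - x ≠ 0 := by linarith
  have hlog : HasDerivAt (fun y : ℝ => Real.log (1 - y)) ((1-x)⁻¹ * (-1)) x :=
    (Real.hasDerivAt_log h1).comp x ((hasDerivAt_id x).const_sub 1)
  have h2 : HasDerivAt (fun y : ℝ => -Real.log (1 - y) - y - y^2/2)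
      (-((1-x)⁻¹ * (-1)) - 1 - (↑2 * x^(2-1))/2) x :=
    ((hlog.neg.sub (hasDerivAt_id x)).sub ((hasDerivAt_pow 2 x).div_const 2))
  convert h2 using 1
  field_simp
  simp only [show (2:ℕ) - 1 = 1 from rfl, pow_one]; ring

lemma log_one_sub_lb {x : ℝ} (hx0 : 0 ≤ x) (hx1 : x < 1) :
    x + x^2/2 ≤ -Real.log (1 - x) := by
  have hmono : MonotoneOn (fun y : ℝ => -Real.log (1 - y) - y - y^2/2) (Set.Ico (0:ℝ) 1) := by
    apply monotoneOn_of_deriv_nonneg (convex_Ico 0 1)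
    · apply ContinuousOn.sub
      apply ContinuousOn.sub
      · apply ContinuousOn.neg
        apply ContinuousOn.log
        · fun_prop
        · intro y hy; simp only [mem_Ico] at hy; intro h; linarith [h]
      · fun_prop
      · fun_prop
    · intro y hy
      rw [interior_Ico] at hy
      exact (myF_deriv y hy).differentiableAt.differentiableWithinAt
    · intro y hy
      rw [interior_Ico] at hy
      rw [(myF_deriv y hy).deriv]
      obtain ⟨hy0, hy1⟩ := hy
      have h1 : (0:ℝ) < 1 - y := by linarith
      have : 1 + y ≤ 1/(1-y) := by
        rw [le_div_iff₀ h1]; nlinarith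
      linarith
  have := hmono (by constructor <;> norm_num : (0:ℝ) ∈ Set.Ico (0:ℝ) 1)
    (⟨hx0, hx1⟩ : x ∈ Set.Ico (0:ℝ) 1) hx0
  simp at this
  linarith

lemma abs_log_lin {x : ℝ} (hx0 : 0 ≤ x) (hx1 : x < 1) :
    |x + Real.log (1 - x)| ≤ x^2/(1-x) := by
  have h := Real.abs_log_sub_add_sum_range_le (x := x) (by rw [abs_of_nonneg hx0]; exact hx1) 1
  simpa [abs_of_nonneg hx0] using h

lemma abs_log_quad {x : ℝ} (hx0 : 0 ≤ x) (hx1 : x < 1) :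
    |x + x^2/2 + Real.log (1 - x)| ≤ x^3/(1-x) := by
  have h := Real.abs_log_sub_add_sum_range_le (x := x) (by rw [abs_of_nonneg hx0]; exact hx1) 2
  simp [Finset.sum_range_succ, abs_of_nonneg hx0] at h
  convert h using 2
  ring

/-- in the critical case β = γ, the solution s*(ε) ∈ (0,1) of
log s - s = log(1-ε) + ϑε - 1 satisfies
s*(ε) = 1 - √(2(1-ϑ)ε) + o(√ε) as ε → 0⁺, for fixed ϑ ∈ [0,1). -/
theorem seir_critical_final_size
    (ϑ : ℝ) (hϑ : ϑ ∈ Set.Ico (0 : ℝ) 1)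
    (ε₀ : ℝ) (hε₀ : 0 < ε₀) (sStar : ℝ → ℝ)
    (hsol : ∀ ε ∈ Set.Ioo (0 : ℝ) ε₀,
      sStar ε ∈ Set.Ioo (0 : ℝ) 1 ∧
        Real.log (sStar ε) - sStar ε = Real.log (1 - ε) + ϑ * ε - 1) :
    (fun ε => sStar ε - (1 - Real.sqrt (2 * (1 - ϑ) * ε)))
      =o[nhdsWithin 0 (Set.Ioi 0)] (fun ε => Real.sqrt ε) := by
  obtain ⟨hϑ0, hϑ1⟩ := hϑ
  set A : ℝ := 2*(1-ϑ) with hA_def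
  clear_value A
  have hApos : 0 < A := by rw [hA_def]; linarith
  set u : ℝ → ℝ := fun ε => 1 - sStar ε with hu_def
  clear_value u
  set δ : ℝ := min ε₀ (1/100) with hδ_def
  have hδpos : 0 < δ := lt_min hε₀ (by norm_num)
  have hδle : δ ≤ 1/100 := min_le_right _ _
  have hmem : ∀ᶠ ε in 𝓝[>](0:ℝ), ε ∈ Set.Ioo 0 δ := Ioo_mem_nhdsGT_of_mem ⟨le_rfl, hδpos⟩
  have key : ∀ ε ∈ Set.Ioo (0:ℝ) δ,
      0 < u ε ∧ u ε < 1 ∧ (-Real.log (1 - u ε) - u ε = -(Real.log (1-ε) + ϑ*ε))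
        ∧ u ε ≤ 2*Real.sqrt ε := by
    intro ε hε
    obtain ⟨hε0, hεδ⟩ := hε
    have hεε₀ : ε < ε₀ := lt_of_lt_of_le hεδ (min_le_left _ _)
    obtain ⟨⟨hs0, hs1⟩, heq⟩ := hsol ε ⟨hε0, hεε₀⟩
    have hu0 : 0 < u ε := by simp only [hu_def]; simp; linarith
    have hu1 : u ε < 1 := by simp only [hu_def]; simp; linarith
    have hsu : (1:ℝ) - u ε = sStar ε := by simp [hu_def]
    have heq' : -Real.log (1 - u ε) - u ε = -(Real.log (1-ε) + ϑ*ε) := by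
      rw [hsu]; simp only [hu_def]; simp; linarith [heq]
    refine ⟨hu0, hu1, heq', ?_⟩
    have hε1 : ε < 1/2 := by linarith [hδle]
    have h1ε : (0:ℝ) < 1 - ε := by linarith
    have hlogε : -Real.log (1-ε) ≤ 2*ε := by
      have h := Real.log_le_sub_one_of_pos (inv_pos.mpr h1ε)
      rw [Real.log_inv] at h
      have h2 : (1-ε)⁻¹ - 1 ≤ 2*ε := by
        have he : (1-ε)⁻¹ - 1 = ε/(1-ε) := by field_simp; ring
        rw [he, div_le_iff₀ h1ε]; nlinarith
      linarith
    have hlb := log_one_sub_lb hu0.le hu1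
    have hG : u ε^2/2 ≤ 2*ε := by
      nlinarith [mul_nonneg hϑ0 hε0.le]
    calc u ε = Real.sqrt (u ε^2) := (Real.sqrt_sq hu0.le).symm
      _ ≤ Real.sqrt (2^2*ε) := Real.sqrt_le_sqrt (by nlinarith)
      _ = 2*Real.sqrt ε := by
          rw [Real.sqrt_mul (by norm_num : (0:ℝ) ≤ 2^2), Real.sqrt_sq (by norm_num : (0:ℝ) ≤ 2)]
  have hbound : ∀ ε ∈ Set.Ioo (0:ℝ) δ, |u ε^2/ε - A| ≤ 32*Real.sqrt ε + 4*ε := by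
    intro ε hε
    obtain ⟨hu0, hu1, heq, hule⟩ := key ε hε
    obtain ⟨hε0, hεδ⟩ := hε
    have hε100 : ε < 1/100 := lt_of_lt_of_le hεδ hδle
    have hsε : Real.sqrt ε ≤ 1/10 := by
      rw [show (1:ℝ)/10 = Real.sqrt ((1/10)^2) by rw [Real.sqrt_sq] <;> norm_num]
      exact Real.sqrt_le_sqrt (by nlinarith)
    have huhalf : u ε ≤ 1/2 := by nlinarith [hule, hsε]
    have hr1 : |u ε + u ε^2/2 + Real.log (1 - u ε)| ≤ 2*u ε^3 := by
      refine (abs_log_quad hu0.le hu1).trans ?_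
      rw [div_le_iff₀ (by linarith : (0:ℝ) < 1 - u ε)]
      nlinarith [pow_nonneg hu0.le 3]
    have hr2 : |ε + Real.log (1 - ε)| ≤ 2*ε^2 := by
      refine (abs_log_lin hε0.le (by linarith : ε < 1)).trans ?_
      rw [div_le_iff₀ (by linarith : (0:ℝ) < 1 - ε)]
      nlinarith [sq_nonneg ε]
    have hcube : u ε^3 ≤ 8*ε*Real.sqrt ε := by
      have h1 : u ε^3 ≤ (2*Real.sqrt ε)^3 := pow_le_pow_left₀ hu0.le hule 3
      have h2 : (2*Real.sqrt ε)^3 = 8*ε*Real.sqrt ε := by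
        have hs2 : Real.sqrt ε ^ 2 = ε := Real.sq_sqrt hε0.le
        linear_combination (8*Real.sqrt ε) * hs2
      linarith
    have e1 : u ε^2 - A*ε = 2*(u ε + u ε^2/2 + Real.log (1-u ε)) - 2*(ε + Real.log (1-ε)) := by
      rw [hA_def]; linear_combination 2*heq
    have hkey : |u ε^2 - A*ε| ≤ 32*(ε*Real.sqrt ε) + 4*ε^2 := by
      rw [abs_le] at hr1 hr2 ⊢
      constructor <;> linarith [hr1.1, hr1.2, hr2.1, hr2.2, hcube, e1]
    have e2 : u ε^2/ε - A = (u ε^2 - A*ε)/ε := by field_simp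
    rw [e2, abs_div, abs_of_pos hε0, div_le_iff₀ hε0]
    calc |u ε^2 - A*ε| ≤ 32*(ε*Real.sqrt ε) + 4*ε^2 := hkey
      _ = (32*Real.sqrt ε + 4*ε)*ε := by ring
  have hb0 : Tendsto (fun ε : ℝ => 32*Real.sqrt ε + 4*ε) (𝓝[>](0:ℝ)) (𝓝 0) := by
    have h1 : Tendsto (fun ε : ℝ => 32*Real.sqrt ε + 4*ε) (𝓝 (0:ℝ))
        (𝓝 (32*Real.sqrt 0 + 4*0)) :=
      ((continuous_const.mul Real.continuous_sqrt).add (continuous_const.mul continuous_id)).tendsto 0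
    simp only [Real.sqrt_zero, mul_zero, add_zero] at h1
    exact h1.mono_left nhdsWithin_le_nhds
  have hsqz : Tendsto (fun ε => u ε^2/ε - A) (𝓝[>](0:ℝ)) (𝓝 0) := by
    apply squeeze_zero_norm' ?_ hb0
    filter_upwards [hmem] with ε hε
    simpa [Real.norm_eq_abs] using hbound ε hε
  have hA2 : Tendsto (fun ε => u ε^2/ε) (𝓝[>](0:ℝ)) (𝓝 A) := by
    have := hsqz.add_const A
    simpa using this
  have hT : Tendsto (fun ε => u ε / Real.sqrt ε) (𝓝[>](0:ℝ)) (𝓝 (Real.sqrt A)) := by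
    have h1 : Tendsto (fun ε => Real.sqrt (u ε^2/ε)) (𝓝[>](0:ℝ)) (𝓝 (Real.sqrt A)) :=
      (Real.continuous_sqrt.tendsto A).comp hA2
    apply h1.congr'
    filter_upwards [hmem] with ε hε
    obtain ⟨hu0, _, _, _⟩ := key ε hε
    rw [Real.sqrt_div (sq_nonneg _), Real.sqrt_sq hu0.le]
  have hne : ∀ᶠ ε in 𝓝[>](0:ℝ), Real.sqrt ε = 0 →
      sStar ε - (1 - Real.sqrt (A * ε)) = 0 := by
    filter_upwards [hmem] with ε hε h0
    exact absurd h0 (ne_of_gt (Real.sqrt_pos.mpr hε.1))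
  rw [isLittleO_iff_tendsto' hne]
  have hfin : Tendsto (fun ε => Real.sqrt A - u ε / Real.sqrt ε) (𝓝[>](0:ℝ))
      (𝓝 (Real.sqrt A - Real.sqrt A)) := tendsto_const_nhds.sub hT
  rw [sub_self] at hfin
  apply hfin.congr'
  filter_upwards [hmem] with ε hε
  have hsε : (0:ℝ) < Real.sqrt ε := Real.sqrt_pos.mpr hε.1
  have hmul : Real.sqrt (A * ε) = Real.sqrt A * Real.sqrt ε := Real.sqrt_mul hApos.le ε
  have hsu : sStar ε = 1 - u ε := by simp [hu_def]
  rw [hmul, hsu]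
  field_simp
  ring
end

section
/- Let p ∈ (0,1), β, γ > 0, q₁, q₂ > 0, and define q by 1/q = (1-p)/q₁ + p/q₂. For every r > 0, (1-p) e^{-βr/(γq₁)} + p e^{-βr/(γq₂)} ≥ e^{-βr/(γq)}. Consequently, if r₂ ∈ (0,1) solves (1-p)e^{-β r/(γq₁)} + p e^{-β r/(γq₂)} + r = 1 and r₁ ∈ (0,1) solves e^{-β r/(γ q)} + r = 1, then r₂ ≤ r₁. -/
open Real Set

/-- Jensen's inequality for the two-group model and comparison
of epidemic sizes: with 1/q = (1-p)/q₁ + p/q₂, for every r > 0,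
(1-p)e^{-βr/(γq₁)} + p e^{-βr/(γq₂)} ≥ e^{-βr/(γq)}; consequently the
two-group epidemic size r₂ is at most the homogeneous one r₁. -/
theorem two_group_epidemic_size_comparison
    (p β γ q₁ q₂ q : ℝ)
    (hp : p ∈ Set.Ioo (0 : ℝ) 1) (hβ : 0 < β) (hγ : 0 < γ)
    (hq₁ : 0 < q₁) (hq₂ : 0 < q₂)
    (hq : 1 / q = (1 - p) / q₁ + p / q₂) :
    (∀ r > (0 : ℝ),
      Real.exp (-β * r / (γ * q)) ≤
        (1 - p) * Real.exp (-β * r / (γ * q₁)) + p * Real.exp (-β * r / (γ * q₂))) ∧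
    (∀ r₁ ∈ Set.Ioo (0 : ℝ) 1, ∀ r₂ ∈ Set.Ioo (0 : ℝ) 1,
      Real.exp (-β * r₁ / (γ * q)) + r₁ = 1 →
      (1 - p) * Real.exp (-β * r₂ / (γ * q₁))
        + p * Real.exp (-β * r₂ / (γ * q₂)) + r₂ = 1 →
      r₂ ≤ r₁) := by
  obtain ⟨hp0, hp1⟩ := hp
  have h1p : 0 < 1 - p := by linarith
  have hqpos : 0 < q := by
    have h : 0 < 1 / q := by
      rw [hq]; positivity
    exact one_div_pos.mp h
  have key : ∀ r : ℝ, -β * r / (γ * q)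
      = (1 - p) * (-β * r / (γ * q₁)) + p * (-β * r / (γ * q₂)) := by
    intro r
    rw [show -β * r / (γ * q) = (-β * r / γ) * (1 / q) by ring, hq]
    ring
  have jensen : ∀ r > (0 : ℝ),
      Real.exp (-β * r / (γ * q)) ≤
        (1 - p) * Real.exp (-β * r / (γ * q₁)) + p * Real.exp (-β * r / (γ * q₂)) := by
    intro r _
    have h := convexOn_exp.2 (mem_univ (-β * r / (γ * q₁)))
      (mem_univ (-β * r / (γ * q₂))) h1p.le hp0.le (by ring)
    rw [key r]
    simpa [smul_eq_mul] using h
  refine ⟨jensen, ?_⟩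
  rintro r₁ ⟨hr₁0, hr₁1⟩ r₂ ⟨hr₂0, hr₂1⟩ h1 h2
  by_contra hlt
  push_neg at hlt
  -- hlt : r₁ < r₂
  have hE2 : Real.exp (-β * r₂ / (γ * q)) ≤ 1 - r₂ := by
    have := jensen r₂ hr₂0
    linarith
  set t : ℝ := r₁ / r₂ with ht
  have ht0 : 0 < t := div_pos hr₁0 (lt_trans hr₁0 hlt)
  have ht1 : 0 < 1 - t := by
    have : t < 1 := (div_lt_one (lt_trans hr₁0 hlt)).mpr hlt
    linarith
  have hr₂ne : r₂ ≠ 0 := ne_of_gt (lt_trans hr₁0 hlt)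
  have hxne : -β * r₂ / (γ * q) ≠ (0 : ℝ) := by
    have : -β * r₂ / (γ * q) < 0 := by
      apply div_neg_of_neg_of_pos
      · nlinarith [lt_trans hr₁0 hlt]
      · positivity
    linarith
  have hstrict := strictConvexOn_exp.2 (mem_univ (-β * r₂ / (γ * q)))
    (mem_univ (0 : ℝ)) hxne ht0 ht1 (by ring)
  have harg : t * (-β * r₂ / (γ * q)) + (1 - t) * 0 = -β * r₁ / (γ * q) := by
    field_simp [ht]
    linear_combination (-β * r₂) * ht + (-β) * div_mul_cancel₀ r₁ hr₂ne
  simp only [smul_eq_mul] at hstrict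
  rw [harg, Real.exp_zero] at hstrict
  have hE1 : Real.exp (-β * r₁ / (γ * q)) = 1 - r₁ := by linarith
  have htr : t * r₂ = r₁ := by rw [ht]; exact div_mul_cancel₀ r₁ hr₂ne
  nlinarith [Real.exp_pos (-β * r₂ / (γ * q))]
end

section
/- For the K-group SEIR system s_k' = -β_k s_k i, e' = (Σ_k β_k s_k) i - α e, i' = α e - γ i, r' = γ i with all β_k > 0 and s_k > 0, the function a(t) = (Σ_k β_k s_k(t))/(β̄ s(t)), where s = Σ_k s_k and β̄ = Σ_k p_k β_k with p_k = s_k(0)/s(0), satisfies a(0) = 1 and a'(t) ≤ 0 for all t ≥ 0 at which i(t) ≥ 0; i.e., a is nonincreasing. -/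
open Real Set Finset

/-- in the K-group SEIR model, the attenuation factor
a(t) = (Σ_k β_k s_k(t))/(β̄ s(t)), with β̄ = Σ_k p_k β_k and
p_k = s_k(0)/s(0), satisfies a(0) = 1 and is nonincreasing on [0,∞)
when i ≥ 0 there. -/
theorem multigroup_attenuation_factor
    (K : ℕ) (hK : 0 < K)
    (α γ : ℝ) (hα : 0 < α) (hγ : 0 < γ)
    (β : Fin K → ℝ) (hβ : ∀ k, 0 < β k)
    (sk : Fin K → ℝ → ℝ) (e i r : ℝ → ℝ)
    (hskpos : ∀ k t, 0 < sk k t)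
    (hsk : ∀ k t, HasDerivAt (sk k) (-β k * sk k t * i t) t)
    (he : ∀ t, HasDerivAt e ((∑ k, β k * sk k t) * i t - α * e t) t)
    (hi : ∀ t, HasDerivAt i (α * e t - γ * i t) t)
    (hr : ∀ t, HasDerivAt r (γ * i t) t)
    (hinn : ∀ t ≥ (0 : ℝ), 0 ≤ i t) :
    let s : ℝ → ℝ := fun t => ∑ k, sk k t
    let βbar : ℝ := ∑ k, (sk k 0 / s 0) * β k
    let a : ℝ → ℝ := fun t => (∑ k, β k * sk k t) / (βbar * s t)
    a 0 = 1 ∧ AntitoneOn a (Set.Ici 0) := by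
  intro s βbar a
  haveI : Nonempty (Fin K) := Fin.pos_iff_nonempty.mp hK
  have hne : (Finset.univ : Finset (Fin K)).Nonempty := Finset.univ_nonempty
  have hspos : ∀ t, 0 < s t := fun t =>
    Finset.sum_pos (fun k _ => hskpos k t) hne
  have hβbar : 0 < βbar :=
    Finset.sum_pos (fun k _ => mul_pos (div_pos (hskpos k 0) (hspos 0)) (hβ k)) hne
  have hβbars : βbar * s 0 = ∑ k, β k * sk k 0 := by
    have : βbar = (∑ k, β k * sk k 0) / s 0 := by
      simp only [βbar, Finset.sum_div]
      congr 1; ext k; ring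
    rw [this, div_mul_cancel₀]
    exact (hspos 0).ne'
  -- derivatives
  have hN : ∀ t, HasDerivAt (fun t => ∑ k, β k * sk k t)
      (-(∑ k, β k ^ 2 * sk k t) * i t) t := by
    intro t
    have := HasDerivAt.fun_sum (u := Finset.univ) (fun k _ => ((hsk k t).const_mul (β k)))
    refine this.congr_deriv ?_
    rw [neg_mul, Finset.sum_mul, ← Finset.sum_neg_distrib]
    congr 1; ext k; ring
  have hs' : ∀ t, HasDerivAt s (-(∑ k, β k * sk k t) * i t) t := by
    intro t
    have := HasDerivAt.fun_sum (u := Finset.univ) (fun k _ => hsk k t)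
    refine this.congr_deriv ?_
    rw [neg_mul, Finset.sum_mul, ← Finset.sum_neg_distrib]
    congr 1; ext k; ring
  have ha : ∀ t, HasDerivAt a
      (((-(∑ k, β k ^ 2 * sk k t) * i t) * (βbar * s t)
        - (∑ k, β k * sk k t) * (βbar * (-(∑ k, β k * sk k t) * i t)))
        / (βbar * s t) ^ 2) t := by
    intro t
    exact (hN t).div ((hs' t).const_mul βbar) (mul_pos hβbar (hspos t)).ne'
  refine ⟨?_, ?_⟩
  · show (∑ k, β k * sk k 0) / (βbar * s 0) = 1
    rw [hβbars, div_self]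
    exact (Finset.sum_pos (fun k _ => mul_pos (hβ k) (hskpos k 0)) hne).ne'
  · apply antitoneOn_of_deriv_nonpos (convex_Ici 0)
    · exact fun t _ => ((ha t).continuousAt).continuousWithinAt
    · exact fun t _ => ((ha t).differentiableAt).differentiableWithinAt
    · intro t ht
      rw [interior_Ici] at ht
      have hit : 0 ≤ i t := hinn t (le_of_lt ht)
      rw [(ha t).deriv]
      apply div_nonpos_of_nonpos_of_nonneg _ (by positivity)
      have hCS : (∑ k, β k * sk k t) ^ 2 ≤ (∑ k, β k ^ 2 * sk k t) * s t := by
        have := Finset.sum_mul_sq_le_sq_mul_sq Finset.univ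
          (fun k => β k * Real.sqrt (sk k t)) (fun k => Real.sqrt (sk k t))
        calc (∑ k, β k * sk k t) ^ 2
            = (∑ k, (β k * Real.sqrt (sk k t)) * Real.sqrt (sk k t)) ^ 2 := by
              congr 1; apply Finset.sum_congr rfl; intro k _
              rw [mul_assoc, Real.mul_self_sqrt (hskpos k t).le]
          _ ≤ (∑ k, (β k * Real.sqrt (sk k t)) ^ 2) * (∑ k, Real.sqrt (sk k t) ^ 2) := this
          _ = (∑ k, β k ^ 2 * sk k t) * s t := by
              congr 1
              · apply Finset.sum_congr rfl; intro k _
                rw [mul_pow, Real.sq_sqrt (hskpos k t).le]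
              · apply Finset.sum_congr rfl; intro k _
                exact Real.sq_sqrt (hskpos k t).le
      nlinarith [hβbar, hit, hspos t, mul_nonneg (mul_nonneg hβbar.le hit) (sub_nonneg.mpr hCS)]
end

section
/- In the K-group SEIR model with average reproduction ratio R̄ = β̄/γ > 1, suppose there is a time t_p at which (e + i)'(t_p) = 0, i.e. β̄ a(t_p) s(t_p) = γ, where a is the nonincreasing attenuation factor with a(0) = 1 and a ≤ 1. Then s(t_p) ≥ 1/R̄, and the peak value satisfies (e+i)(t_p) ≤ (e+i)(0) + h(1/R̄) - h(s(0)) = 1 - (1/R̄)(1 + log(R̄ s(0))), where h(x) = (1/R̄) log x - x, assuming r(0) = 0 and s(0) ≥ 1/R̄. -/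
open Real Set Finset

/-- peak bound for the K-group SEIR model. With β̄ the mean
transmission rate, R̄ = β̄/γ > 1, a the nonincreasing attenuation factor with
a(0) = 1 and a ≤ 1, r(0) = 0 (so s(0) + e(0) + i(0) = 1) and s(0) ≥ 1/R̄,
at any time t_p with β̄ a(t_p) s(t_p) = γ one has s(t_p) ≥ 1/R̄ and
(e+i)(t_p) ≤ 1 - (1/R̄)(1 + log(R̄ s(0))). -/
theorem multigroup_peak_bound
    (βbar γ : ℝ) (hβbar : 0 < βbar) (hγ : 0 < γ)
    (hR : 1 < βbar / γ)
    (s e i a : ℝ → ℝ)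
    (hspos : ∀ t ≥ (0 : ℝ), 0 < s t)
    (hinn : ∀ t ≥ (0 : ℝ), 0 ≤ i t)
    (ha0 : a 0 = 1) (hale : ∀ t ≥ (0 : ℝ), a t ≤ 1)
    (hamono : AntitoneOn a (Set.Ici 0))
    (hs : ∀ t, HasDerivAt s (-(βbar * a t * s t * i t)) t)
    (hei : ∀ t, HasDerivAt (fun u => e u + i u)
      (βbar * a t * s t * i t - γ * i t) t)
    (hsum : s 0 + e 0 + i 0 = 1)
    (hs0 : 1 / (βbar / γ) ≤ s 0)
    (tp : ℝ) (htp : 0 ≤ tp)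
    (hpeak : βbar * a tp * s tp = γ) :
    1 / (βbar / γ) ≤ s tp ∧
      e tp + i tp ≤
        1 - (1 / (βbar / γ)) * (1 + Real.log ((βbar / γ) * s 0)) := by
  have h1 : 1 / (βbar / γ) = γ / βbar := one_div_div βbar γ
  have hs0pos : 0 < s 0 := hspos 0 le_rfl
  have hstp : 0 < s tp := hspos tp htp
  have hatp1 : a tp ≤ 1 := hale tp htp
  have hcpos : 0 < γ / βbar := by positivity
  have hstpge : γ / βbar ≤ s tp := by
    rw [div_le_iff₀ hβbar]
    have h2 : βbar * s tp * a tp ≤ βbar * s tp * 1 :=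
      mul_le_mul_of_nonneg_left hatp1 (mul_pos hβbar hstp).le
    nlinarith
  refine ⟨by rw [h1]; exact hstpge, ?_⟩
  set c : ℝ := γ / βbar with hc
  set L : ℝ → ℝ := fun t => e t + i t + s t - c * Real.log (s t) with hLdef
  have hL : ∀ t ≥ (0:ℝ), HasDerivAt L (γ * i t * (a t - 1)) t := by
    intro t ht
    have hst := hspos t ht
    have h2 := (((hs t).log hst.ne').const_mul c)
    have h3 := ((hei t).add (hs t)).sub h2
    convert h3 using 1
    · rfl
    · rfl
    · rfl
    rw [hc]
    field_simp
    ring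
  have hLmono : L tp ≤ L 0 := by
    rcases eq_or_lt_of_le htp with h | h
    · rw [← h]
    · have hanti : AntitoneOn L (Icc 0 tp) := by
        apply antitoneOn_of_deriv_nonpos (convex_Icc 0 tp)
        · intro t ht
          exact (hL t ht.1).continuousAt.continuousWithinAt
        · intro t ht
          rw [interior_Icc] at ht
          exact (hL t ht.1.le).differentiableAt.differentiableWithinAt
        · intro t ht
          rw [interior_Icc] at ht
          rw [(hL t ht.1.le).deriv]
          have hi := hinn t ht.1.le
          have ha := hale t ht.1.le
          exact mul_nonpos_of_nonneg_of_nonpos (mul_nonneg hγ.le hi) (by linarith)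
      exact hanti (left_mem_Icc.mpr htp) (right_mem_Icc.mpr htp) htp
  -- concavity bound: c * log (s tp) - s tp ≤ c * log c - c
  have hlog : Real.log (s tp / c) ≤ s tp / c - 1 :=
    Real.log_le_sub_one_of_pos (by positivity)
  have hlogdiv : Real.log (s tp / c) = Real.log (s tp) - Real.log c :=
    Real.log_div hstp.ne' hcpos.ne'
  have hkey : c * Real.log (s tp) - s tp ≤ c * Real.log c - c := by
    rw [hlogdiv] at hlog
    have := mul_le_mul_of_nonneg_left hlog hcpos.le
    have hcne : c ≠ 0 := hcpos.ne'
    calc c * Real.log (s tp) - s tp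
        = c * (Real.log (s tp) - Real.log c) + c * Real.log c - s tp := by ring
      _ ≤ c * (s tp / c - 1) + c * Real.log c - s tp := by linarith
      _ = c * Real.log c - c := by field_simp; ring
  have hlogc : Real.log c = -Real.log (βbar / γ) := by
    rw [hc, Real.log_div hγ.ne' hβbar.ne', Real.log_div hβbar.ne' hγ.ne']
    ring
  have hlogmul : Real.log ((βbar / γ) * s 0) = Real.log (βbar / γ) + Real.log (s 0) :=
    Real.log_mul (by positivity) hs0pos.ne'
  have hL0 : L 0 = 1 - c * Real.log (s 0) := by
    simp only [hLdef]; linarith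
  have hLtp : e tp + i tp = L tp - s tp + c * Real.log (s tp) := by
    simp only [hLdef]; ring
  rw [h1, hlogmul, hLtp]
  have : L tp - s tp + c * Real.log (s tp) ≤ L 0 + (c * Real.log c - c) := by linarith
  rw [hL0, hlogc] at this
  linarith
end

section
/- Let p_1, ..., p_K ≥ 0 with Σ p_k = 1, R_k > 0, R̄ = Σ p_k R_k > 1, and s₀ ∈ (0, 1]. If ζ ∈ (0, s₀) satisfies 1 - ζ = s₀ Σ_k p_k e^{-R_k ζ}, and ζ₀ ∈ (0, s₀) satisfies 1 - ζ₀ = s₀ e^{-R̄ ζ₀}, then ζ ≤ ζ₀. -/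
open Real Finset

/-- the total epidemic size ζ of the K-group model is at most
the epidemic size ζ₀ of the homogeneous model with the averaged reproduction
ratio R̄ = Σ p_k R_k > 1. -/
theorem multigroup_epidemic_size_le_homogeneous
    (K : ℕ) (p R : Fin K → ℝ)
    (hp : ∀ k, 0 ≤ p k) (hpsum : ∑ k, p k = 1)
    (hR : ∀ k, 0 < R k)
    (hRbar : 1 < ∑ k, p k * R k)
    (s₀ : ℝ) (hs₀ : s₀ ∈ Set.Ioc (0 : ℝ) 1)
    (ζ ζ₀ : ℝ)
    (hζ : ζ ∈ Set.Ioo 0 s₀)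
    (hζ₀ : ζ₀ ∈ Set.Ioo 0 s₀)
    (heq : 1 - ζ = s₀ * ∑ k, p k * Real.exp (-(R k) * ζ))
    (heq₀ : 1 - ζ₀ = s₀ * Real.exp (-(∑ k, p k * R k) * ζ₀)) :
    ζ ≤ ζ₀ := by
  obtain ⟨hζ0, hζs⟩ := hζ
  obtain ⟨hζ₀0, hζ₀s⟩ := hζ₀
  obtain ⟨hs0, hs1⟩ := hs₀
  set r := ∑ k, p k * R k with hr
  have hr1 : 1 < r := hRbar
  have hr0 : 0 < r := lt_trans one_pos hr1
  by_contra hcon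
  push_neg at hcon
  -- Jensen: exp(-r ζ) ≤ ∑ p_k exp(-R_k ζ)
  have jensen : Real.exp (-r * ζ) ≤ ∑ k, p k * Real.exp (-(R k) * ζ) := by
    have h := convexOn_exp.map_sum_le (t := Finset.univ) (w := p)
      (p := fun k => -(R k) * ζ) (fun i _ => hp i) (by simpa using hpsum)
      (fun i _ => Set.mem_univ _)
    simp only [smul_eq_mul] at h
    have hsum : ∑ k, p k * (-(R k) * ζ) = -r * ζ := by
      rw [hr, neg_mul, Finset.sum_mul, ← Finset.sum_neg_distrib]
      exact Finset.sum_congr rfl (fun k _ => by ring)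
    rwa [hsum] at h
  have key : s₀ * Real.exp (-r * ζ) ≤ 1 - ζ := by
    rw [heq]
    exact mul_le_mul_of_nonneg_left jensen hs0.le
  -- strict convexity of exp at ζ₀ = (1-t)·0 + t·ζ
  set t := ζ₀ / ζ with ht
  have ht0 : 0 < t := div_pos hζ₀0 hζ0
  have ht1 : t < 1 := (div_lt_one hζ0).mpr hcon
  have htζ : t * ζ = ζ₀ := div_mul_cancel₀ ζ₀ (ne_of_gt hζ0)
  have hne : (0 : ℝ) ≠ -r * ζ := by nlinarith
  have hsc := strictConvexOn_exp.2 (Set.mem_univ (0 : ℝ)) (Set.mem_univ (-r * ζ))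
    hne (by linarith : (0:ℝ) < 1 - t) ht0 (by ring)
  simp only [smul_eq_mul, mul_zero, zero_add, Real.exp_zero, mul_one] at hsc
  have hcomb : t * (-r * ζ) = -r * ζ₀ := by rw [← htζ]; ring
  rw [hcomb] at hsc
  -- combine
  have h1 : 1 - ζ₀ < s₀ * ((1 - t) + t * Real.exp (-r * ζ)) := by
    rw [heq₀]
    exact mul_lt_mul_of_pos_left hsc hs0
  nlinarith [mul_le_mul_of_nonneg_left key ht0.le]
end
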